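/- Let 1 < α ≤ 2, 0 ≤ β ≤ α - 1, a < b. For every t ∈ [a,b], ((t-a)^(α-1)/Γ(α+1)) · (α/(α-β)·(b-a) - (t-a)) ≤ (α-1)^(α-1)/((α-β)^α Γ(α+1)) · (b-a)^α. -/

import Mathlib

lemma stmt_8_aux (α x L D : ℝ) (hα : 1 < α) (hx0 : 0 ≤ x) (hL : 0 < L)
    (hD0 : 0 < D) :
    x ^ (α - 1) * (α / D * L - x) ≤ (α - 1) ^ (α - 1) * L ^ α / D ^ α := by
  have hα0 : (0:ℝ) < α := by linarith
  have hA1 : (0:ℝ) ≤ α - 1 := by linarith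
  set y := α / D * L - x with hydef
  rcases le_or_gt y 0 with hy | hy
  · have h1 : x ^ (α - 1) * y ≤ 0 :=
      mul_nonpos_of_nonneg_of_nonpos (Real.rpow_nonneg hx0 _) hy
    have h2 : (0:ℝ) ≤ (α - 1) ^ (α - 1) * L ^ α / D ^ α :=
      div_nonneg (mul_nonneg (Real.rpow_nonneg hA1 _) (Real.rpow_nonneg hL.le _))
        (Real.rpow_nonneg hD0.le _)
    exact le_trans h1 h2
  · have hs : (0:ℝ) < (α - 1) * L / D := div_pos (mul_pos (by linarith) hL) hD0
    have hr : (0:ℝ) < L / D := div_pos hL hD0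
    set s := (α - 1) * L / D with hsdef
    set r := L / D with hrdef
    have hu0 : 0 ≤ x / s := div_nonneg hx0 hs.le
    have hv0 : 0 ≤ y / r := div_nonneg hy.le hr.le
    have amgm := Real.geom_mean_le_arith_mean2_weighted
      (div_nonneg hA1 hα0.le) (by positivity : (0:ℝ) ≤ 1/α)
      hu0 hv0 (by field_simp; ring)
    have hsum : (α - 1)/α * (x/s) + 1/α * (y/r) = 1 := by
      have h1 : α - 1 ≠ 0 := by linarith
      rw [hydef, hsdef, hrdef]
      field_simp
      ring
    rw [hsum] at amgm
    have hpow := Real.rpow_le_rpow (by positivity) amgm hα0.le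
    rw [Real.one_rpow, Real.mul_rpow (Real.rpow_nonneg hu0 _) (Real.rpow_nonneg hv0 _),
      ← Real.rpow_mul hu0, ← Real.rpow_mul hv0] at hpow
    have e1 : (α - 1)/α * α = α - 1 := by field_simp
    have e2 : 1/α * α = 1 := by field_simp
    rw [e1, e2, Real.rpow_one] at hpow
    rw [Real.div_rpow hx0 hs.le] at hpow
    have hs' : (0:ℝ) < s ^ (α - 1) := Real.rpow_pos_of_pos hs _
    have hbig : x ^ (α - 1) * y ≤ s ^ (α - 1) * r := by
      calc x ^ (α - 1) * y = (x ^ (α - 1) / s ^ (α - 1) * (y / r)) * (s ^ (α - 1) * r) := by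
            field_simp
        _ ≤ 1 * (s ^ (α - 1) * r) :=
            mul_le_mul_of_nonneg_right hpow (mul_nonneg hs'.le hr.le)
        _ = s ^ (α - 1) * r := by ring
    have hconst : s ^ (α - 1) * r = (α - 1) ^ (α - 1) * L ^ α / D ^ α := by
      rw [hsdef, hrdef, Real.div_rpow (mul_nonneg hA1 hL.le) hD0.le,
        Real.mul_rpow hA1 hL.le, div_mul_div_comm]
      congr 1
      · rw [mul_assoc, ← Real.rpow_add_one hL.ne', sub_add_cancel]
      · rw [← Real.rpow_add_one hD0.ne', sub_add_cancel]
    linarith [hconst ▸ hbig]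

theorem stmt_8 (α β a b : ℝ) (hα : 1 < α) (hα2 : α ≤ 2) (hβ : 0 ≤ β)
    (hβα : β ≤ α - 1) (hab : a < b) :
    ∀ t ∈ Set.Icc a b,
      (t - a) ^ (α - 1) / Real.Gamma (α + 1) *
          (α / (α - β) * (b - a) - (t - a)) ≤
        (α - 1) ^ (α - 1) / ((α - β) ^ α * Real.Gamma (α + 1)) *
          (b - a) ^ α := by
  intro t ht
  obtain ⟨ht1, ht2⟩ := ht
  have hΓ : 0 < Real.Gamma (α + 1) := Real.Gamma_pos_of_pos (by linarith)
  have key := stmt_8_aux α (t - a) (b - a) (α - β) hα (by linarith) (by linarith)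
    (by linarith)
  calc (t - a) ^ (α - 1) / Real.Gamma (α + 1) * (α / (α - β) * (b - a) - (t - a))
      = ((t - a) ^ (α - 1) * (α / (α - β) * (b - a) - (t - a))) / Real.Gamma (α + 1) := by
        ring
    _ ≤ ((α - 1) ^ (α - 1) * (b - a) ^ α / (α - β) ^ α) / Real.Gamma (α + 1) := by
        gcongr
    _ = (α - 1) ^ (α - 1) / ((α - β) ^ α * Real.Gamma (α + 1)) * (b - a) ^ α := by
        ring
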